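/- Let T be an n-vertex tournament that is not strongly connected, with minimum semidegree at least (1/4 − δ²)n for some δ ∈ (0, 1/2). Then T contains at least (1/2 − 2δ)n vertices whose in-degree is smaller than (1/4 + 2δ)n. -/

import Mathlib

open Finset

def IsTournament {V : Type*} (T : V → V → Prop) : Prop :=
  (∀ v, ¬ T v v) ∧ ∀ u v : V, u ≠ v → (T u v ↔ ¬ T v u)

def inDeg {V : Type*} [Fintype V] (T : V → V → Prop) [DecidableRel T] (v : V) : ℕ :=
  (Finset.univ.filter (fun u => T u v)).card

def outDeg {V : Type*} [Fintype V] (T : V → V → Prop) [DecidableRel T] (v : V) : ℕ :=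
  (Finset.univ.filter (fun u => T v u)).card

instance {V : Type*} (T : V → V → Prop) [DecidableRel T] :
    DecidablePred (fun p : V × V => T p.1 p.2) :=
  fun p => inferInstanceAs (Decidable (T p.1 p.2))

def eCount {V : Type*} (T : V → V → Prop) [DecidableRel T] (A B : Finset V) : ℕ :=
  ((A ×ˢ B).filter (fun p => T p.1 p.2)).card

def minSemidegree {V : Type*} [Fintype V] (T : V → V → Prop) [DecidableRel T] : ℕ :=
  if h : (Finset.univ : Finset V).Nonempty then
    Finset.univ.inf' h (fun v => min (inDeg T v) (outDeg T v))
  else 0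

lemma ecount_sum_right {V : Type*} (T : V → V → Prop) [DecidableRel T] (A : Finset V) :
    eCount T A A = ∑ v ∈ A, (A.filter fun u => T u v).card := by
  unfold eCount
  rw [Finset.card_filter, Finset.sum_product, Finset.sum_comm]
  exact Finset.sum_congr rfl fun v _ => (Finset.card_filter _ _).symm

lemma ecount_sum_left {V : Type*} (T : V → V → Prop) [DecidableRel T] (A : Finset V) :
    eCount T A A = ∑ u ∈ A, (A.filter fun w => T u w).card := by
  unfold eCount
  rw [Finset.card_filter, Finset.sum_product]
  exact Finset.sum_congr rfl fun v _ => (Finset.card_filter _ _).symm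

lemma two_ecount {V : Type*} (T : V → V → Prop) [DecidableRel T] (hT : IsTournament T)
    (A : Finset V) : 2 * eCount T A A + A.card = A.card * A.card := by
  classical
  obtain ⟨hirr, hasym⟩ := hT
  have h1 : (A ×ˢ A).filter (fun p => T p.1 p.2) = A.offDiag.filter (fun p => T p.1 p.2) := by
    ext p
    simp only [Finset.mem_filter, Finset.mem_product, Finset.mem_offDiag]
    constructor
    · rintro ⟨⟨ha, hb⟩, h3⟩
      exact ⟨⟨ha, hb, fun he => hirr p.2 (he ▸ h3)⟩, h3⟩
    · rintro ⟨⟨ha, hb, _⟩, h3⟩; exact ⟨⟨ha, hb⟩, h3⟩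
  have h2 : (A.offDiag.filter (fun p => ¬ T p.1 p.2)).card
      = (A.offDiag.filter (fun p => T p.1 p.2)).card := by
    apply Finset.card_nbij' (fun p => p.swap) (fun p => p.swap)
    · intro p hp
      simp only [Finset.mem_coe, Finset.mem_filter, Finset.mem_offDiag] at hp ⊢
      obtain ⟨⟨ha, hb, hne⟩, hnt⟩ := hp
      exact ⟨⟨hb, ha, fun he => hne he.symm⟩, (hasym p.2 p.1 (fun he => hne he.symm)).mpr hnt⟩
    · intro p hp
      simp only [Finset.mem_coe, Finset.mem_filter, Finset.mem_offDiag] at hp ⊢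
      obtain ⟨⟨ha, hb, hne⟩, ht⟩ := hp
      refine ⟨⟨hb, ha, fun he => hne he.symm⟩, ?_⟩
      intro h
      exact ((hasym p.1 p.2 hne).mp ht) h
    · intro p _; simp
    · intro p _; simp
  have h3 := Finset.card_filter_add_card_filter_not
    (s := A.offDiag) (p := fun p => T p.1 p.2)
  have h4 : A.offDiag.card = A.card * A.card - A.card := Finset.offDiag_card A
  have h5 : A.card ≤ A.card * A.card := by
    rcases Nat.eq_zero_or_pos A.card with h | h
    · simp [h]
    · exact Nat.le_mul_of_pos_left _ h
  unfold eCount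
  rw [h1]
  omega

set_option maxHeartbeats 1000000 in
lemma deg_lb (x c S : ℝ) (h1 : 2*S + x = x*x) (h2 : x*c ≤ S) (hx : 1 ≤ x) : 2*c ≤ x - 1 := by
  nlinarith [mul_nonneg (sub_nonneg.mpr hx) (sub_nonneg.mpr hx)]

set_option maxHeartbeats 1600000 in
lemma quad_lb (δ N x : ℝ) (hδ0 : 0 < δ) (hδ1 : δ < 1/2) (hN : 0 ≤ N)
    (hlo : (1/2-2*δ^2)*N ≤ x - 1) (hhi : x ≤ N - 1 - (1/2-2*δ^2)*N) :
    (1/2-2*δ)*((2*δ+δ^2)*N)*N ≤ x*((1/4+2*δ)*N) - (x*x - x)/2 := by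
  nlinarith [mul_nonneg (sub_nonneg.mpr hlo) (sub_nonneg.mpr hhi),
    mul_nonneg (mul_nonneg hδ0.le hδ0.le) (mul_nonneg hN hN),
    mul_nonneg hδ0.le (mul_nonneg hN hN), mul_nonneg hδ0.le hN,
    mul_nonneg (mul_nonneg hδ0.le hδ0.le) hN,
    mul_nonneg (sub_nonneg.mpr hlo) hN, mul_nonneg (sub_nonneg.mpr hhi) hN,
    mul_nonneg (sub_nonneg.mpr hlo) (mul_nonneg hδ0.le hN),
    mul_nonneg (sub_nonneg.mpr hhi) (mul_nonneg hδ0.le hN)]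

lemma key_div (δ N s : ℝ) (hδ0 : 0 < δ) (hN : 0 ≤ N)
    (h : (1/2-2*δ)*((2*δ+δ^2)*N)*N ≤ s*((2*δ+δ^2)*N)) (hs : 0 ≤ s) :
    (1/2-2*δ)*N ≤ s := by
  rcases eq_or_lt_of_le hN with hN' | hN'
  · rw [← hN']; simpa using hs
  · have hK : 0 < (2*δ+δ^2)*N := by positivity
    have h' : ((1/2-2*δ)*N) * ((2*δ+δ^2)*N) ≤ s * ((2*δ+δ^2)*N) := by nlinarith [h]
    exact le_of_mul_le_mul_right h' hK

theorem stmt_1 {V : Type*} [Fintype V] (n : ℕ) (hn : Fintype.card V = n)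
    (T : V → V → Prop) [DecidableRel T] (hT : IsTournament T)
    (δ : ℝ) (hδ0 : 0 < δ) (hδ1 : δ < 1/2)
    (hdeg : ∀ v : V, (1/4 - δ^2) * n ≤ (inDeg T v : ℝ) ∧ (1/4 - δ^2) * n ≤ (outDeg T v : ℝ))
    (hnsc : ¬ ∀ u v : V, Relation.ReflTransGen T u v) :
    (1/2 - 2*δ) * n ≤
      ((Finset.univ.filter (fun v : V => (inDeg T v : ℝ) < (1/4 + 2*δ) * n)).card : ℝ) := by
  classical
  push_neg at hnsc
  obtain ⟨u0, v0, huv⟩ := hnsc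
  set A : Finset V := univ.filter (fun w => ¬ Relation.ReflTransGen T u0 w) with hAdef
  set B : Finset V := univ.filter (fun w => Relation.ReflTransGen T u0 w) with hBdef
  have hvA : v0 ∈ A := by simp [hAdef, huv]
  have hu0B : u0 ∈ B := by
    simp only [hBdef, mem_filter, mem_univ, true_and]
    exact Relation.ReflTransGen.refl
  have hinA : ∀ a ∈ A, (univ.filter fun w => T w a) = A.filter fun w => T w a := by
    intro a ha
    simp only [hAdef, mem_filter, mem_univ, true_and] at ha
    ext w
    simp only [hAdef, mem_filter, mem_univ, true_and]
    exact ⟨fun hw => ⟨fun hreach => ha (hreach.tail hw), hw⟩, fun h => h.2⟩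
  have houtB : ∀ b ∈ B, (univ.filter fun w => T b w) = B.filter fun w => T b w := by
    intro b hb
    simp only [hBdef, mem_filter, mem_univ, true_and] at hb
    ext w
    simp only [hBdef, mem_filter, mem_univ, true_and]
    exact ⟨fun hw => ⟨hb.tail hw, hw⟩, fun h => h.2⟩
  have hsumA : ∑ a ∈ A, inDeg T a = eCount T A A := by
    rw [ecount_sum_right]
    exact Finset.sum_congr rfl fun a ha => by unfold inDeg; rw [hinA a ha]
  have hsumB : ∑ b ∈ B, outDeg T b = eCount T B B := by
    rw [ecount_sum_left]
    exact Finset.sum_congr rfl fun b hb => by unfold outDeg; rw [houtB b hb]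
  have habn : B.card + A.card = n := by
    rw [hAdef, hBdef, Finset.card_filter_add_card_filter_not, ← hn, Finset.card_univ]
  have htwoA := two_ecount T hT A
  have htwoB := two_ecount T hT B
  rw [← hsumA] at htwoA
  rw [← hsumB] at htwoB
  have hN0 : (0:ℝ) ≤ (n:ℝ) := Nat.cast_nonneg n
  have ha1 : (1:ℝ) ≤ (A.card:ℝ) := by
    exact_mod_cast Nat.one_le_iff_ne_zero.mpr (Finset.card_ne_zero_of_mem hvA)
  have hb1 : (1:ℝ) ≤ (B.card:ℝ) := by
    exact_mod_cast Nat.one_le_iff_ne_zero.mpr (Finset.card_ne_zero_of_mem hu0B)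
  have habN : (B.card:ℝ) + (A.card:ℝ) = (n:ℝ) := by exact_mod_cast habn
  have hAA : 2 * (∑ w ∈ A, (inDeg T w : ℝ)) + (A.card:ℝ) = (A.card:ℝ) * (A.card:ℝ) := by
    exact_mod_cast htwoA
  have hBB : 2 * (∑ w ∈ B, (outDeg T w : ℝ)) + (B.card:ℝ) = (B.card:ℝ) * (B.card:ℝ) := by
    exact_mod_cast htwoB
  have hsumAlb : (A.card:ℝ) * ((1/4 - δ^2) * (n:ℝ)) ≤ ∑ w ∈ A, (inDeg T w : ℝ) := by
    have := Finset.card_nsmul_le_sum A (fun w => (inDeg T w : ℝ)) ((1/4 - δ^2) * (n:ℝ))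
      (fun w _ => (hdeg w).1)
    simpa [nsmul_eq_mul] using this
  have hsumBlb : (B.card:ℝ) * ((1/4 - δ^2) * (n:ℝ)) ≤ ∑ w ∈ B, (outDeg T w : ℝ) := by
    have := Finset.card_nsmul_le_sum B (fun w => (outDeg T w : ℝ)) ((1/4 - δ^2) * (n:ℝ))
      (fun w _ => (hdeg w).2)
    simpa [nsmul_eq_mul] using this
  have ha_lb : 2 * ((1/4 - δ^2) * (n:ℝ)) ≤ (A.card:ℝ) - 1 :=
    deg_lb _ _ _ hAA hsumAlb ha1
  have hb_lb : 2 * ((1/4 - δ^2) * (n:ℝ)) ≤ (B.card:ℝ) - 1 :=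
    deg_lb _ _ _ hBB hsumBlb hb1
  have ha_lb' : (1/2 - 2*δ^2) * (n:ℝ) ≤ (A.card:ℝ) - 1 := by linarith
  have ha_ub : (A.card:ℝ) ≤ (n:ℝ) - 1 - (1/2 - 2*δ^2) * (n:ℝ) := by linarith
  -- split A by in-degree
  set S : Finset V := A.filter (fun w => (inDeg T w : ℝ) < (1/4 + 2*δ) * (n:ℝ)) with hSdef
  set Sc : Finset V := A.filter (fun w => ¬ (inDeg T w : ℝ) < (1/4 + 2*δ) * (n:ℝ)) with hScdef
  have hstA : S.card + Sc.card = A.card := by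
    rw [hSdef, hScdef]
    exact Finset.card_filter_add_card_filter_not _
  have hts : (Sc.card:ℝ) = (A.card:ℝ) - (S.card:ℝ) := by
    have : (S.card:ℝ) + (Sc.card:ℝ) = (A.card:ℝ) := by exact_mod_cast hstA
    linarith
  have hsplit : ∑ w ∈ A, (inDeg T w : ℝ)
      = (∑ w ∈ S, (inDeg T w : ℝ)) + ∑ w ∈ Sc, (inDeg T w : ℝ) := by
    rw [hSdef, hScdef]
    exact (Finset.sum_filter_add_sum_filter_not A _ _).symm
  have hSlb : (S.card:ℝ) * ((1/4 - δ^2) * (n:ℝ)) ≤ ∑ w ∈ S, (inDeg T w : ℝ) := by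
    have := Finset.card_nsmul_le_sum S (fun w => (inDeg T w : ℝ)) ((1/4 - δ^2) * (n:ℝ))
      (fun w _ => (hdeg w).1)
    simpa [nsmul_eq_mul] using this
  have hSclb : (Sc.card:ℝ) * ((1/4 + 2*δ) * (n:ℝ)) ≤ ∑ w ∈ Sc, (inDeg T w : ℝ) := by
    have := Finset.card_nsmul_le_sum Sc (fun w => (inDeg T w : ℝ)) ((1/4 + 2*δ) * (n:ℝ))
      (fun w hw => by
        simp only [hScdef, mem_filter] at hw
        exact le_of_not_gt hw.2)
    simpa [nsmul_eq_mul] using this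
  rw [hts] at hSclb
  have h1 : 2 * ((S.card:ℝ) * ((1/4 - δ^2) * (n:ℝ))
      + ((A.card:ℝ) - (S.card:ℝ)) * ((1/4 + 2*δ) * (n:ℝ))) + (A.card:ℝ)
      ≤ (A.card:ℝ) * (A.card:ℝ) := by
    rw [← hAA, hsplit]
    linarith
  have hquad := quad_lb δ (n:ℝ) (A.card:ℝ) hδ0 hδ1 hN0 ha_lb' ha_ub
  have hs_ineq : (1/2-2*δ)*((2*δ+δ^2)*(n:ℝ))*(n:ℝ) ≤ (S.card:ℝ)*((2*δ+δ^2)*(n:ℝ)) := by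
    nlinarith [h1, hquad]
  have hkey : (1/2 - 2*δ) * (n:ℝ) ≤ (S.card:ℝ) :=
    key_div δ (n:ℝ) (S.card:ℝ) hδ0 hN0 hs_ineq (Nat.cast_nonneg _)
  have hsub : S ⊆ univ.filter (fun v : V => (inDeg T v : ℝ) < (1/4 + 2*δ) * (n:ℝ)) := by
    intro w hw
    simp only [hSdef, mem_filter] at hw
    simp only [mem_filter, mem_univ, true_and]
    exact hw.2
  have hcard := Finset.card_le_card hsub
  calc (1/2 - 2*δ) * (n:ℝ) ≤ (S.card:ℝ) := hkey
    _ ≤ _ := by exact_mod_cast hcard
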